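/- Let α : ℕ → ℕ satisfy log(n) ≤ α(n) < n for all n, and write u_n = n/α(n) (so u_n > 1 and ξ(u_n) is defined). Then, as n → ∞: (i) x_{n,α}(1) = exp( ξ(u_n)/α(n) ) + O( log(u_n + 1)/α(n)² ); (ii) ξ(u_n) = log(u_n) + log(log(u_n + 2)) + O( log(log(u_n + 2)) / log(u_n + 2) ); (iii) α(n)·log(x_{n,α}(1)) = ξ(u_n) + O( log(u_n + 1)/α(n) ). -/

import Mathlib

open Real

private lemma log_le_div_e {x : ℝ} (hx : 0 < x) : Real.log x ≤ x / Real.exp 1 := by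
  have h := Real.log_le_sub_one_of_pos (show 0 < x / Real.exp 1 by positivity)
  rw [Real.log_div (ne_of_gt hx) (Real.exp_ne_zero 1), Real.log_exp] at h
  linarith

private lemma phi'_nonneg (s : ℝ) : 0 ≤ (s - 1) * Real.exp s + 1 := by
  have h1 : 1 - s ≤ Real.exp (-s) := by have := Real.add_one_le_exp (-s); linarith
  have h2 : (1 - s) * Real.exp s ≤ Real.exp (-s) * Real.exp s :=
    mul_le_mul_of_nonneg_right h1 (Real.exp_pos s).le
  rw [← Real.exp_add, neg_add_cancel, Real.exp_zero] at h2
  nlinarith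

private lemma phi_hasDeriv (t : ℝ) :
    HasDerivAt (fun t : ℝ => (t - 2) * Real.exp t + t + 2) ((t - 1) * Real.exp t + 1) t := by
  have h1 : HasDerivAt (fun t : ℝ => (t - 2) * Real.exp t)
      (1 * Real.exp t + (t - 2) * Real.exp t) t :=
    ((hasDerivAt_id t).sub_const 2).mul (Real.hasDerivAt_exp t)
  have h2 : HasDerivAt (fun t : ℝ => (t - 2) * Real.exp t + t + 2) _ t :=
    (h1.add (hasDerivAt_id t)).add_const 2
  convert h2 using 1
  ring

private lemma phi_nonneg {t : ℝ} (ht : 0 ≤ t) : 0 ≤ (t - 2) * Real.exp t + t + 2 := by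
  have hm : Monotone (fun t : ℝ => (t - 2) * Real.exp t + t + 2) :=
    monotone_of_hasDerivAt_nonneg phi_hasDeriv (fun s => phi'_nonneg s)
  have := hm ht
  simpa using this

private lemma G_hasDeriv {t : ℝ} (ht : 0 < t) :
    HasDerivAt (fun t : ℝ => Real.log (Real.exp t - 1) - Real.log t - t / 2)
      (Real.exp t / (Real.exp t - 1) - 1 / t - 1 / 2) t := by
  have hE : 0 < Real.exp t - 1 := by
    have : (1:ℝ) < Real.exp t := by rw [← Real.exp_zero]; exact Real.exp_lt_exp.2 ht
    linarith
  have h1 : HasDerivAt (fun t : ℝ => Real.exp t - 1) (Real.exp t) t :=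
    (Real.hasDerivAt_exp t).sub_const 1
  have h2 := h1.log (ne_of_gt hE)
  have h3 := Real.hasDerivAt_log (ne_of_gt ht)
  have h4 : HasDerivAt (fun t : ℝ => t / 2) (1 / 2) t := by
    simpa using (hasDerivAt_id t).div_const 2
  have : HasDerivAt (fun t : ℝ => Real.log (Real.exp t - 1) - Real.log t - t / 2) _ t :=
    (h2.sub h3).sub h4
  simpa [one_div] using this

private lemma G_deriv_nonneg {t : ℝ} (ht : 0 < t) :
    0 ≤ Real.exp t / (Real.exp t - 1) - 1 / t - 1 / 2 := by
  have hE : 0 < Real.exp t - 1 := by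
    have : (1:ℝ) < Real.exp t := by rw [← Real.exp_zero]; exact Real.exp_lt_exp.2 ht
    linarith
  have hphi := phi_nonneg ht.le
  rw [sub_nonneg, ← sub_nonneg]
  have key : (1 / t + 1 / 2) ≤ Real.exp t / (Real.exp t - 1) := by
    rw [div_add_div _ _ (ne_of_gt ht) two_ne_zero, div_le_div_iff₀ (by positivity) hE]
    nlinarith
  linarith

private lemma G_mono : MonotoneOn
    (fun t : ℝ => Real.log (Real.exp t - 1) - Real.log t - t / 2) (Set.Ioi 0) := by
  have hint : interior (Set.Ioi (0:ℝ)) = Set.Ioi 0 := isOpen_Ioi.interior_eq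
  apply monotoneOn_of_deriv_nonneg (convex_Ioi 0)
  · exact fun s hs => (G_hasDeriv hs).continuousAt.continuousWithinAt
  · rw [hint]; exact fun s hs => (G_hasDeriv hs).differentiableAt.differentiableWithinAt
  · rw [hint]; intro s hs; rw [(G_hasDeriv hs).deriv]; exact G_deriv_nonneg hs

private lemma key_mono {a b : ℝ} (ha : 0 < a) (hab : a ≤ b) :
    Real.exp ((b - a) / 2) * ((Real.exp a - 1) / a) ≤ (Real.exp b - 1) / b := by
  have hb : 0 < b := lt_of_lt_of_le ha hab
  have hEa : 0 < Real.exp a - 1 := by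
    have : (1:ℝ) < Real.exp a := by rw [← Real.exp_zero]; exact Real.exp_lt_exp.2 ha
    linarith
  have hEb : 0 < Real.exp b - 1 := by
    have : (1:ℝ) < Real.exp b := by rw [← Real.exp_zero]; exact Real.exp_lt_exp.2 hb
    linarith
  have h := G_mono (Set.mem_Ioi.2 ha) (Set.mem_Ioi.2 hb) hab
  simp only at h
  have h2 : (b - a) / 2 + Real.log ((Real.exp a - 1) / a) ≤ Real.log ((Real.exp b - 1) / b) := by
    rw [Real.log_div (ne_of_gt hEa) (ne_of_gt ha), Real.log_div (ne_of_gt hEb) (ne_of_gt hb)]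
    linarith
  have h3 := Real.exp_le_exp.2 h2
  rw [Real.exp_add, Real.exp_log (by positivity), Real.exp_log (by positivity)] at h3
  exact h3

section xi
variable {u ξu : ℝ} (hu : 1 < u) (hne : ξu ≠ 0) (heq : Real.exp ξu = 1 + u * ξu)
include hu hne heq

private lemma xi_pos : 0 < ξu := by
  have h := Real.add_one_lt_exp hne
  rcases lt_or_gt_of_ne hne with h1 | h1
  · nlinarith
  · exact h1

/-- F(t) < 0 for 0 < t < ξu -/
private lemma F_neg {t : ℝ} (ht : 0 < t) (htξ : t < ξu) : Real.exp t - 1 - u * t < 0 := by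
  have hξ : 0 < ξu := xi_pos hu hne heq
  have hb : 0 < t / ξu := by positivity
  have ha : 0 < 1 - t / ξu := by
    rw [sub_pos, div_lt_one hξ]; exact htξ
  have hsum : (1 - t / ξu) + t / ξu = 1 := by ring
  have h := strictConvexOn_exp.2 (Set.mem_univ (0:ℝ)) (Set.mem_univ ξu)
    (ne_of_lt hξ) ha hb hsum
  simp only [smul_eq_mul, mul_zero, zero_add, Real.exp_zero, mul_one] at h
  rw [div_mul_cancel₀ _ (ne_of_gt hξ)] at h
  have : (1 - t / ξu) + t / ξu * Real.exp ξu = 1 + u * t := by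
    rw [heq]; field_simp; ring
  rw [this] at h
  linarith

/-- F(t) ≥ 0 for t ≥ ξu -/
private lemma F_nonneg {t : ℝ} (ht : ξu ≤ t) : 0 ≤ Real.exp t - 1 - u * t := by
  have hξ : 0 < ξu := xi_pos hu hne heq
  rcases eq_or_lt_of_le ht with h | h
  · rw [← h]; linarith [heq]
  · have htp : 0 < t := lt_trans hξ h
    have hb : 0 < ξu / t := by positivity
    have ha : 0 < 1 - ξu / t := by rw [sub_pos, div_lt_one htp]; exact h
    have hsum : (1 - ξu / t) + ξu / t = 1 := by ring
    have hc := convexOn_exp.2 (Set.mem_univ (0:ℝ)) (Set.mem_univ t) ha.le hb.le hsum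
    simp only [smul_eq_mul, mul_zero, zero_add, Real.exp_zero, mul_one] at hc
    rw [div_mul_cancel₀ _ (ne_of_gt htp)] at hc
    rw [heq] at hc
    -- 1 + u ξu ≤ (1 - ξu/t) + (ξu/t) exp t
    have h2 : u * ξu + ξu / t ≤ ξu / t * Real.exp t := by linarith
    have h3 : ξu / t * (1 + u * t) ≤ ξu / t * Real.exp t := by
      have : ξu / t * (1 + u * t) = u * ξu + ξu / t := by field_simp; ring
      rw [this]; exact h2
    have h4 : 1 + u * t ≤ Real.exp t := (mul_le_mul_iff_right₀ hb).1 h3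
    linarith

private lemma F_lt_imp {t : ℝ} (ht : 0 < t) (hF : Real.exp t - 1 - u * t < 0) : t < ξu := by
  by_contra h
  push_neg at h
  exact absurd (F_nonneg hu hne heq h) (by linarith)

private lemma F_pos_imp {t : ℝ} (ht : 0 < t) (hF : 0 < Real.exp t - 1 - u * t) : ξu < t := by
  by_contra h
  push_neg at h
  rcases eq_or_lt_of_le h with h1 | h1
  · rw [h1] at hF; rw [heq] at hF; linarith
  · exact absurd (F_neg hu hne heq ht h1) (by linarith)

private lemma xi_lt_two_log : ξu < 2 * Real.log (1 + u) := by
  have h1u : (0:ℝ) < 1 + u := by linarith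
  have hb : 0 < 2 * Real.log (1 + u) := by
    have : 0 < Real.log (1 + u) := Real.log_pos (by linarith)
    linarith
  apply F_pos_imp hu hne heq hb
  have hexp : Real.exp (2 * Real.log (1 + u)) = (1 + u) ^ 2 := by
    rw [mul_comm, Real.exp_mul, Real.exp_log h1u]
    norm_num
  rw [hexp]
  have hlog : Real.log (1 + u) ≤ (1 + u) / Real.exp 1 := log_le_div_e h1u
  have he : (2.7182818283 : ℝ) < Real.exp 1 := Real.exp_one_gt_d9
  have h2 : Real.log (1 + u) ≤ (1 + u) / 2.7 := by
    have : (1 + u) / Real.exp 1 ≤ (1 + u) / 2.7 := by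
      apply div_le_div_of_nonneg_left h1u.le (by norm_num) (by linarith)
    linarith
  have h2' : 2.7 * Real.log (1 + u) ≤ 1 + u := by
    rw [le_div_iff₀ (by norm_num : (0:ℝ) < 2.7)] at h2
    linarith
  nlinarith [mul_le_mul_of_nonneg_left h2' (by linarith : (0:ℝ) ≤ u)]

private lemma xi_gt_one (hu2 : 2 ≤ u) : 1 < ξu := by
  apply F_lt_imp hu hne heq one_pos
  have : Real.exp 1 < 2.7182818286 := Real.exp_one_lt_d9
  simp only [mul_one]
  nlinarith

private lemma xi_gt_log (hu2 : 2 ≤ u) : Real.log u < ξu := by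
  have h1 : 1 < ξu := xi_gt_one hu hne heq hu2
  have : u < Real.exp ξu := by nlinarith [heq]
  calc Real.log u < Real.log (Real.exp ξu) := by
        apply Real.log_lt_log (by linarith) this
    _ = ξu := Real.log_exp ξu

end xi

section xi2
variable {u ξu : ℝ} (hu3 : 3 ≤ u) (hne : ξu ≠ 0) (heq : Real.exp ξu = 1 + u * ξu)
include hu3 hne heq

private lemma xi_le_LLL :
    ξu ≤ Real.log (u + 2) + Real.log (Real.log (u + 2)) + 1 := by
  have hu : 1 < u := by linarith
  set L := Real.log (u + 2) with hL
  have hL5 : Real.log 5 ≤ L := Real.log_le_log (by norm_num) (by linarith)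
  have he9 : (2.7182818283 : ℝ) < Real.exp 1 := Real.exp_one_gt_d9
  have he9' : Real.exp 1 < 2.7182818286 := Real.exp_one_lt_d9
  have hL1 : 1 < L := by
    have : 1 < Real.log 5 := by
      rw [show (1:ℝ) = Real.log (Real.exp 1) from (Real.log_exp 1).symm]
      apply Real.log_lt_log (Real.exp_pos 1)
      linarith
    linarith
  have hLL : Real.log L ≤ L / Real.exp 1 := log_le_div_e (by linarith)
  have hLL' : Real.log L * 2.7 ≤ L := by
    have h1 : L / Real.exp 1 ≤ L / 2.7 :=
      div_le_div_of_nonneg_left (by linarith) (by norm_num) (by linarith)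
    have h2 : Real.log L ≤ L / 2.7 := le_trans hLL h1
    rw [le_div_iff₀ (by norm_num : (0:ℝ) < 2.7)] at h2
    exact h2
  have hLLpos : 0 < Real.log L := Real.log_pos hL1
  set T := L + Real.log L + 1 with hT
  have hTpos : 0 < T := by linarith
  have hexpT : Real.exp T = (u + 2) * L * Real.exp 1 := by
    rw [hT, Real.exp_add, Real.exp_add, Real.exp_log (by linarith : (0:ℝ) < u + 2),
      Real.exp_log (by linarith : (0:ℝ) < L)]
  have hF : 0 < Real.exp T - 1 - u * T := by
    rw [hexpT, hT]
    nlinarith [mul_le_mul_of_nonneg_left hLL' (by linarith : (0:ℝ) ≤ u),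
      mul_lt_mul_of_pos_left he9 (mul_pos (by linarith : (0:ℝ) < u+2) (by linarith : (0:ℝ) < L))]
  exact le_of_lt (F_pos_imp hu hne heq hTpos hF)

end xi2

private noncomputable def C2 : ℝ :=
  (2 * Real.log 4 + Real.log 3 + Real.log (Real.log 5)) /
      (Real.log (Real.log 3) / Real.log 5) + (4 + 4 / Real.log (Real.log 5))

private lemma log3_gt_one : (1:ℝ) < Real.log 3 := by
  rw [show (1:ℝ) = Real.log (Real.exp 1) from (Real.log_exp 1).symm]
  exact Real.log_lt_log (Real.exp_pos 1) (by linarith [Real.exp_one_lt_d9])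

private lemma log5_gt_one : (1:ℝ) < Real.log 5 :=
  lt_of_lt_of_le log3_gt_one (Real.log_le_log (by norm_num) (by norm_num))

private lemma ll3_pos : (0:ℝ) < Real.log (Real.log 3) := Real.log_pos log3_gt_one
private lemma ll5_pos : (0:ℝ) < Real.log (Real.log 5) := Real.log_pos log5_gt_one

set_option maxHeartbeats 2000000 in
private lemma part2_bound {u ξu : ℝ} (hu : 1 < u) (hne : ξu ≠ 0)
    (heq : Real.exp ξu = 1 + u * ξu) :
    |ξu - (Real.log u + Real.log (Real.log (u + 2)))| ≤
      C2 * (Real.log (Real.log (u + 2)) / Real.log (u + 2)) := by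
  have hξpos : 0 < ξu := xi_pos hu hne heq
  set L := Real.log (u + 2) with hLdef
  set LL := Real.log L with hLLdef
  have hL3 : Real.log 3 ≤ L := Real.log_le_log (by norm_num) (by linarith)
  have hL1 : 1 < L := lt_of_lt_of_le log3_gt_one hL3
  have hL0 : 0 < L := by linarith
  have hLL3 : Real.log (Real.log 3) ≤ LL :=
    Real.log_le_log (by linarith [log3_gt_one]) hL3
  have hLL0 : 0 < LL := lt_of_lt_of_le ll3_pos hLL3
  have hLLL0 : 0 < LL / L := by positivity
  have hll5 := ll5_pos
  have hc0 : 0 < Real.log (Real.log 3) / Real.log 5 :=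
    div_pos ll3_pos (by linarith [log5_gt_one])
  have hM : 0 < 2 * Real.log 4 + Real.log 3 + Real.log (Real.log 5) := by
    have h4 : 0 < Real.log 4 := Real.log_pos (by norm_num)
    have h3 : 0 < Real.log 3 := by linarith [log3_gt_one]
    linarith
  have hMc0 : 0 ≤ (2 * Real.log 4 + Real.log 3 + Real.log (Real.log 5)) /
      (Real.log (Real.log 3) / Real.log 5) := le_of_lt (div_pos hM hc0)
  rcases lt_or_ge u 3 with hu3 | hu3
  · -- small u case
    have hξlt : ξu < 2 * Real.log (1 + u) := xi_lt_two_log hu hne heq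
    have hlog4 : Real.log (1 + u) ≤ Real.log 4 := Real.log_le_log (by linarith) (by linarith)
    have hlogu : Real.log u ≤ Real.log 3 := Real.log_le_log (by linarith) (by linarith)
    have hlogu0 : 0 < Real.log u := Real.log_pos hu
    have hL5 : L ≤ Real.log 5 := Real.log_le_log (by linarith) (by linarith)
    have hLL5 : LL ≤ Real.log (Real.log 5) :=
      Real.log_le_log (by linarith) hL5
    have habs : |ξu - (Real.log u + LL)| ≤
        2 * Real.log 4 + Real.log 3 + Real.log (Real.log 5) := by
      rw [abs_le]
      constructor <;> nlinarith
    -- LL/L ≥ loglog3/log5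
    have hratio : Real.log (Real.log 3) / Real.log 5 ≤ LL / L := by
      apply div_le_div₀ (le_of_lt hLL0) hLL3 (by linarith [log5_gt_one]) hL5
    calc |ξu - (Real.log u + LL)| ≤
          2 * Real.log 4 + Real.log 3 + Real.log (Real.log 5) := habs
      _ = ((2 * Real.log 4 + Real.log 3 + Real.log (Real.log 5)) /
            (Real.log (Real.log 3) / Real.log 5)) *
            (Real.log (Real.log 3) / Real.log 5) := (div_mul_cancel₀ _ (ne_of_gt hc0)).symm
      _ ≤ ((2 * Real.log 4 + Real.log 3 + Real.log (Real.log 5)) /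
            (Real.log (Real.log 3) / Real.log 5)) * (LL / L) := by
          apply mul_le_mul_of_nonneg_left hratio hMc0
      _ ≤ C2 * (LL / L) := by
          apply mul_le_mul_of_nonneg_right _ (le_of_lt hLLL0)
          rw [C2]
          have : 0 < 4 + 4 / Real.log (Real.log 5) := by positivity
          linarith
  · -- large u case
    have hξ1 : 1 < ξu := xi_gt_one hu hne heq (by linarith)
    have hloguξ : Real.log u < ξu := xi_gt_log hu hne heq (by linarith)
    have hlogu1 : 1 ≤ Real.log u := by
      have h := Real.log_le_log (by norm_num : (0:ℝ) < 3) (by linarith : (3:ℝ) ≤ u)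
      linarith [log3_gt_one]
    have hξle : ξu ≤ L + LL + 1 := xi_le_LLL hu3 hne heq
    have hL5 : Real.log 5 ≤ L := Real.log_le_log (by norm_num) (by linarith)
    have hLL5 : Real.log (Real.log 5) ≤ LL :=
      Real.log_le_log (by linarith [log5_gt_one]) hL5
    have hu0 : (0:ℝ) < u := by linarith
    have huξ : 0 < u * ξu := mul_pos hu0 hξpos
    have hid : ξu = Real.log u + Real.log ξu + Real.log (1 + 1/(u*ξu)) := by
      have hprod : (1 + u * ξu) = u * ξu * (1 + 1/(u*ξu)) := by field_simp; ring
      calc ξu = Real.log (Real.exp ξu) := (Real.log_exp ξu).symm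
        _ = Real.log (1 + u * ξu) := by rw [heq]
        _ = Real.log (u * ξu * (1 + 1/(u*ξu))) := by rw [← hprod]
        _ = Real.log u + Real.log ξu + Real.log (1 + 1/(u*ξu)) := by
            rw [Real.log_mul (by positivity) (by positivity),
              Real.log_mul (ne_of_gt hu0) (ne_of_gt hξpos)]
    have huξ' : 0 < 1/(u*ξu) := one_div_pos.2 huξ
    have hp2a : 0 ≤ Real.log (1 + 1/(u*ξu)) := Real.log_nonneg (by linarith)
    have hp2b : Real.log (1 + 1/(u*ξu)) ≤ 1/u := by
      have h1 : Real.log (1 + 1/(u*ξu)) ≤ 1/(u*ξu) := by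
        have := Real.log_le_sub_one_of_pos (show (0:ℝ) < 1 + 1/(u*ξu) by positivity)
        linarith
      have h2 : 1/(u*ξu) ≤ 1/u := one_div_le_one_div_of_le hu0 (by nlinarith)
      linarith
    have hup : Real.log ξu ≤ LL + (LL + 1)/L := by
      have h1 : Real.log ξu ≤ Real.log (L + LL + 1) := Real.log_le_log hξpos hξle
      have h2 : L + LL + 1 = L * (1 + (LL+1)/L) := by field_simp; ring
      have h3 : Real.log (L * (1 + (LL+1)/L)) = LL + Real.log (1 + (LL+1)/L) := by
        rw [Real.log_mul (ne_of_gt hL0) (by positivity)]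
      have h4 : Real.log (1 + (LL+1)/L) ≤ (LL+1)/L := by
        have := Real.log_le_sub_one_of_pos (show (0:ℝ) < 1 + (LL+1)/L by positivity)
        linarith
      rw [h2, h3] at h1
      linarith
    have hLlogu : Real.log u ≤ L := Real.log_le_log hu0 (by linarith)
    have hlow : LL - 2/u ≤ Real.log ξu := by
      have h1 : Real.log (Real.log u) ≤ Real.log ξu :=
        Real.log_le_log (by linarith) (le_of_lt hloguξ)
      have h2 : LL - Real.log (Real.log u) = Real.log (L / Real.log u) :=
        (Real.log_div (ne_of_gt hL0) (by linarith)).symm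
      have h3 : Real.log (L / Real.log u) ≤ L / Real.log u - 1 :=
        Real.log_le_sub_one_of_pos (by positivity)
      have h4 : L / Real.log u - 1 = (L - Real.log u)/Real.log u := by field_simp
      have h5 : L - Real.log u ≤ 2/u := by
        have e1 : L - Real.log u = Real.log ((u+2)/u) := by
          rw [Real.log_div (by linarith) (ne_of_gt hu0)]
        have e2 := Real.log_le_sub_one_of_pos (show (0:ℝ) < (u+2)/u by positivity)
        have e3 : (u+2)/u - 1 = 2/u := by field_simp; ring
        rw [e1]
        linarith
      have h6 : (L - Real.log u)/Real.log u ≤ L - Real.log u :=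
        div_le_self (by linarith) hlogu1
      linarith
    have habs : |ξu - (Real.log u + LL)| ≤ (LL+1)/L + 2/u := by
      have hpos1 : (0:ℝ) ≤ (LL+1)/L := by positivity
      have hpos2 : 1/u ≤ 2/u := (div_le_div_iff_of_pos_right hu0).2 (by norm_num)
      rw [abs_le]
      constructor
      · linarith
      · linarith
    have hLu : L ≤ u := by
      have h1 : L ≤ (u+2)/Real.exp 1 := log_le_div_e (by linarith)
      have h2 : (u+2)/Real.exp 1 ≤ u := by
        rw [div_le_iff₀ (Real.exp_pos 1)]
        nlinarith [Real.exp_one_gt_d9]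
      linarith
    set ll5 := Real.log (Real.log 5) with hll5def
    have h1 : (LL+1)/L ≤ (1 + 1/ll5) * (LL/L) := by
      rw [← mul_div_assoc]
      apply (div_le_div_iff_of_pos_right hL0).2
      have : 1 ≤ 1/ll5 * LL := by
        rw [one_div_mul_eq_div, le_div_iff₀ hll5]
        linarith
      nlinarith
    have h2 : 2/u ≤ (2/ll5) * (LL/L) := by
      have h2a : 2/u ≤ 2/L := div_le_div_of_nonneg_left (by norm_num) hL0 hLu
      have h2b : 2/L ≤ (2/ll5) * (LL/L) := by
        rw [div_mul_div_comm, div_le_div_iff₀ hL0 (mul_pos hll5 hL0)]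
        nlinarith
      linarith
    have hfin : (LL+1)/L + 2/u ≤ C2 * (LL/L) := by
      rw [C2]
      have hc : (1 + 1/ll5) + 2/ll5 ≤ 4 + 4/ll5 := by
        have h0 : 0 < 1/ll5 := by positivity
        rw [show (2:ℝ)/ll5 = 2*(1/ll5) by ring, show (4:ℝ)/ll5 = 4*(1/ll5) by ring]
        linarith
      nlinarith [mul_nonneg hMc0 (le_of_lt hLLL0), hLLL0.le,
        mul_le_mul_of_nonneg_right hc hLLL0.le]
    linarith

set_option maxHeartbeats 2000000 in
private lemma main_est {m n : ℕ} (hn : 3 ≤ n) (hα1 : Real.log n ≤ (m:ℝ)) (hα2 : m < n)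
    {x : ℝ} (hx0 : 0 < x) (hxs : ∑ j ∈ Finset.Icc 1 m, x ^ j = (n:ℝ))
    {ξu : ℝ} (hne : ξu ≠ 0) (heq : Real.exp ξu = 1 + ((n:ℝ)/(m:ℝ)) * ξu) :
    |(m:ℝ) * Real.log x - ξu| ≤ 4 * (Real.log ((n:ℝ)/(m:ℝ) + 1) / (m:ℝ)) ∧
    |x - Real.exp (ξu / (m:ℝ))| ≤ 250 * (Real.log ((n:ℝ)/(m:ℝ) + 1) / (m:ℝ)^2) := by
  have hn3 : (3:ℝ) ≤ (n:ℝ) := by exact_mod_cast hn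
  have hlog3 := log3_gt_one
  have hm1 : 1 < (m:ℝ) := lt_of_lt_of_le (lt_of_lt_of_le hlog3
    (Real.log_le_log (by norm_num) hn3)) hα1
  have hm0 : (0:ℝ) < m := by linarith
  have hmn : (m:ℝ) < (n:ℝ) := by exact_mod_cast hα2
  set u : ℝ := (n:ℝ)/(m:ℝ) with hudef
  have hu : 1 < u := (one_lt_div hm0).2 hmn
  have hum : u * m = (n:ℝ) := div_mul_cancel₀ _ (ne_of_gt hm0)
  -- x > 1
  have hx1 : 1 < x := by
    by_contra h
    push_neg at h
    have hb : ∑ j ∈ Finset.Icc 1 m, x ^ j ≤ (m:ℝ) := by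
      calc ∑ j ∈ Finset.Icc 1 m, x ^ j ≤ ∑ j ∈ Finset.Icc 1 m, 1 := by
            apply Finset.sum_le_sum
            intro j hj
            exact pow_le_one₀ hx0.le h
        _ = (m:ℝ) := by simp
    rw [hxs] at hb
    linarith
  have hs0 : 0 < Real.log x := Real.log_pos hx1
  set s := Real.log x with hsdef
  set t := (m:ℝ) * s with htdef
  have ht0 : 0 < t := mul_pos hm0 hs0
  have hexpt : Real.exp t = x ^ m := by
    rw [htdef, Real.exp_nat_mul, Real.exp_log hx0]
  have hmne : m ≠ 0 := Nat.cast_ne_zero.mp (ne_of_gt hm0)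
  have hE0 : 0 < x ^ m - 1 := by
    have : 1 < x ^ m := one_lt_pow₀ hx1 hmne
    linarith
  -- sum identity
  have hgeom : (n:ℝ) = x * ((x ^ m - 1) / (x - 1)) := by
    rw [← hxs]
    have h1 : Finset.Icc 1 m = Finset.Ico 1 (m+1) := by
      rw [Finset.Ico_add_one_right_eq_Icc]
    rw [h1, Finset.sum_Ico_eq_sum_range]
    simp only [Nat.add_sub_cancel]
    have h2 : ∀ i, x ^ (1 + i) = x * x ^ i := by
      intro i; rw [pow_add, pow_one]
    rw [Finset.sum_congr rfl (fun i _ => h2 i), ← Finset.mul_sum,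
      geom_sum_eq (ne_of_gt hx1)]
  have hxm1 : 0 < x - 1 := by linarith
  -- log x bounds
  have hlb : x - 1 ≤ x * s := by
    have h := Real.log_le_sub_one_of_pos (show (0:ℝ) < 1/x by positivity)
    rw [Real.log_div one_ne_zero (ne_of_gt hx0), Real.log_one] at h
    have hxinv : x * (1/x) = 1 := mul_one_div_cancel (ne_of_gt hx0)
    nlinarith [mul_le_mul_of_nonneg_left h hx0.le]
  have hub : s ≤ x - 1 := by
    have := Real.log_le_sub_one_of_pos hx0
    linarith
  -- I1 : (exp t - 1)/t ≤ u
  have hn' : (n:ℝ) * (x - 1) = x * (x ^ m - 1) := by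
    rw [hgeom]; field_simp
  have hut : u * t = (n:ℝ) * s := by rw [htdef, ← mul_assoc, hum]
  have hI1 : (Real.exp t - 1) / t ≤ u := by
    rw [hexpt, div_le_iff₀ ht0, hut]
    have hn's : (n:ℝ) * (x - 1) * s = x * (x ^ m - 1) * s := by rw [hn']
    nlinarith [mul_le_mul_of_nonneg_left hlb hE0.le, hxm1, hs0]
  -- I2 : u ≤ exp(t/m) * ((exp t - 1)/t),  exp(t/m) = x
  have hexptm : Real.exp (t / m) = x := by
    have e : t / (m:ℝ) = s := by rw [htdef]; field_simp
    rw [e, Real.exp_log hx0]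
  have hI2 : u ≤ x * ((Real.exp t - 1) / t) := by
    rw [hexpt]
    have hkey : (n:ℝ) * s ≤ x * (x ^ m - 1) := by
      nlinarith [mul_le_mul_of_nonneg_left hub (by positivity : (0:ℝ) ≤ (n:ℝ))]
    calc u = u * t / t := by field_simp
      _ = (n:ℝ) * s / t := by rw [hut]
      _ ≤ x * (x ^ m - 1) / t := (div_le_div_iff_of_pos_right ht0).2 hkey
      _ = x * ((x ^ m - 1) / t) := by rw [mul_div_assoc]
  -- h(ξ) = u
  have hξpos : 0 < ξu := xi_pos hu hne heq
  have hhξ : (Real.exp ξu - 1) / ξu = u := by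
    rw [heq]; field_simp; ring
  have hht0 : 0 < (Real.exp t - 1) / t := by
    apply div_pos _ ht0
    have : (1:ℝ) < Real.exp t := by rw [← Real.exp_zero]; exact Real.exp_lt_exp.2 ht0
    linarith
  have hu0 : 0 < u := by linarith
  -- t ≤ ξu
  have htξ : t ≤ ξu := by
    by_contra h
    push_neg at h
    have hk := key_mono hξpos (le_of_lt h)
    rw [hhξ] at hk
    have h1 : 1 < Real.exp ((t - ξu)/2) := by
      rw [← Real.exp_zero]
      apply Real.exp_lt_exp.2
      linarith
    nlinarith
  -- ξu - t ≤ 2 t / m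
  have hgap : ξu - t ≤ 2 * t / m := by
    have hk := key_mono ht0 htξ
    rw [hhξ] at hk
    have h2 : Real.exp ((ξu - t)/2) * ((Real.exp t - 1)/t) ≤
        Real.exp (t/m) * ((Real.exp t - 1)/t) := by
      rw [hexptm]
      exact le_trans hk hI2
    have h3 : Real.exp ((ξu - t)/2) ≤ Real.exp (t/m) :=
      le_of_mul_le_mul_right h2 hht0
    have h4 := Real.exp_le_exp.1 h3
    rw [div_le_div_iff₀ (by norm_num) hm0] at h4
    rw [le_div_iff₀ hm0]
    linarith
  -- final bounds
  have hξlt : ξu < 2 * Real.log (1 + u) := xi_lt_two_log hu hne heq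
  have hl1u : 0 < Real.log (1 + u) := Real.log_pos (by linarith)
  have hcomm : Real.log (u + 1) = Real.log (1 + u) := by rw [add_comm]
  have hgap2 : ξu - t ≤ 4 * Real.log (1 + u) / m := by
    have h1 : 2 * t / m ≤ 4 * Real.log (1 + u) / m :=
      (div_le_div_iff_of_pos_right hm0).2 (by linarith)
    linarith
  have hiii : |(m:ℝ) * Real.log x - ξu| ≤ 4 * (Real.log (u + 1) / m) := by
    have : |t - ξu| = ξu - t := by
      rw [abs_of_nonpos (by linarith)]; ring
    rw [this, hcomm, ← mul_div_assoc]
    exact hgap2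
  refine ⟨hiii, ?_⟩
  -- part (i)
  have hmono : Real.exp (t / m) ≤ Real.exp (ξu / m) :=
    Real.exp_le_exp.2 ((div_le_div_iff_of_pos_right hm0).2 htξ)
  have habs : |x - Real.exp (ξu / m)| = Real.exp (ξu / m) - Real.exp (t / m) := by
    rw [← hexptm, abs_of_nonpos (by linarith)]; ring
  have hb1 : Real.exp (ξu / m) - Real.exp (t / m) ≤ Real.exp (ξu / m) * ((ξu - t) / m) := by
    have h1 := Real.add_one_le_exp ((t - ξu) / m)
    have h2 : Real.exp (t / m) = Real.exp (ξu / m) * Real.exp ((t - ξu) / m) := by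
      rw [← Real.exp_add]; ring_nf
    have h3 : Real.exp (ξu / m) * ((t - ξu) / m + 1) ≤ Real.exp (t / m) := by
      rw [h2]; exact mul_le_mul_of_nonneg_left h1 (Real.exp_pos _).le
    have h4 : Real.exp (ξu/(m:ℝ)) * ((t-ξu)/(m:ℝ) + 1) =
        -(Real.exp (ξu/(m:ℝ)) * ((ξu-t)/(m:ℝ))) + Real.exp (ξu/(m:ℝ)) := by ring
    rw [h4] at h3
    linarith
  -- exp(ξu/m) ≤ 60
  have hlogn : Real.log ((n:ℝ) + 1) ≤ 2 * (m:ℝ) := by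
    have h1 : Real.log ((n:ℝ) + 1) ≤ Real.log ((n:ℝ) ^ 2) := by
      apply Real.log_le_log (by linarith) (by nlinarith)
    rw [Real.log_pow] at h1
    push_cast at h1
    linarith
  have hun : u + 1 ≤ (n:ℝ) + 1 := by
    have : u ≤ (n:ℝ) := by
      rw [hudef]
      exact div_le_self (by linarith) (by linarith)
    linarith
  have hξm4 : ξu / m ≤ 4 := by
    have h1 : Real.log (1 + u) ≤ Real.log ((n:ℝ) + 1) := by
      apply Real.log_le_log (by linarith) (by linarith)
    rw [div_le_iff₀ hm0]
    linarith
  have hexp4 : Real.exp (4:ℝ) < 60 := by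
    have he : Real.exp (4:ℝ) = Real.exp 1 ^ (4:ℕ) := by
      rw [← Real.exp_nat_mul]; norm_num
    have h1 : Real.exp 1 < 2.72 := by linarith [Real.exp_one_lt_d9]
    have h2 : Real.exp 1 ^ (4:ℕ) < 2.72 ^ (4:ℕ) :=
      pow_lt_pow_left₀ h1 (Real.exp_pos 1).le (by norm_num)
    rw [he]
    nlinarith
  have he60 : Real.exp (ξu / m) ≤ 60 :=
    le_trans (Real.exp_le_exp.2 hξm4) hexp4.le
  rw [habs]
  calc Real.exp (ξu / m) - Real.exp (t / m) ≤ Real.exp (ξu / m) * ((ξu - t) / m) := hb1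
    _ ≤ 60 * ((ξu - t) / m) := by
        apply mul_le_mul_of_nonneg_right he60
        apply div_nonneg (by linarith) hm0.le
    _ ≤ 60 * ((4 * Real.log (1 + u) / m) / m) := by
        apply mul_le_mul_of_nonneg_left _ (by norm_num)
        exact (div_le_div_iff_of_pos_right hm0).2 hgap2
    _ = 240 * (Real.log (1 + u) / (m:ℝ) ^ 2) := by ring
    _ ≤ 250 * (Real.log (u + 1) / (m:ℝ) ^ 2) := by
        rw [hcomm]
        have : 0 ≤ Real.log (1 + u) / (m:ℝ) ^ 2 := by positivity
        linarith


private lemma C2_nonneg : 0 ≤ C2 := by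
  rw [C2]
  have h1 : 0 ≤ (2 * Real.log 4 + Real.log 3 + Real.log (Real.log 5)) /
      (Real.log (Real.log 3) / Real.log 5) := by
    apply div_nonneg
    · have := log3_gt_one
      have h4 : 0 ≤ Real.log 4 := Real.log_nonneg (by norm_num)
      have := ll5_pos
      linarith
    · exact le_of_lt (div_pos ll3_pos (by linarith [log5_gt_one]))
  have h2 : 0 ≤ 4 + 4 / Real.log (Real.log 5) := by
    have := ll5_pos; positivity
  linarith



open Filter Asymptotics in
/-- asymptotics of the saddle point and of `ξ`.  Assume
`log n ≤ α(n) < n` (for all `n` where this is meaningful, i.e. `n ≥ 2`), and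
write `u n = n/α(n)`.  Here `x n = x_{n,α}(1)` is the positive solution of
`∑_{j=1}^{α(n)} x^j = n`, and for `u > 1`, `ξ u` is the nonzero solution of
`exp ξ = 1 + u ξ`.  Then:
(i) `x_{n,α}(1) = exp(ξ(u_n)/α(n)) + O(log(u_n + 1)/α(n)²)`;
(ii) `ξ(u_n) = log u_n + log log(u_n + 2) + O(log log(u_n + 2)/log(u_n + 2))`;
(iii) `α(n) log x_{n,α}(1) = ξ(u_n) + O(log(u_n + 1)/α(n))`. -/
theorem stmt_19 (α : ℕ → ℕ)
    (hα : ∀ n : ℕ, 2 ≤ n → Real.log n ≤ (α n : ℝ) ∧ α n < n)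
    (x : ℕ → ℝ)
    (hx : ∀ n : ℕ, 2 ≤ n → 0 < x n ∧ ∑ j ∈ Finset.Icc 1 (α n), x n ^ j = (n : ℝ))
    (ξ : ℝ → ℝ) (hξ : ∀ u : ℝ, 1 < u → ξ u ≠ 0 ∧ Real.exp (ξ u) = 1 + u * ξ u) :
    ((fun n : ℕ => x n - Real.exp (ξ ((n : ℝ) / α n) / α n))
      =O[atTop] fun n : ℕ => Real.log ((n : ℝ) / α n + 1) / (α n : ℝ) ^ 2) ∧
    ((fun n : ℕ => ξ ((n : ℝ) / α n) -
        (Real.log ((n : ℝ) / α n) + Real.log (Real.log ((n : ℝ) / α n + 2))))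
      =O[atTop] fun n : ℕ =>
        Real.log (Real.log ((n : ℝ) / α n + 2)) / Real.log ((n : ℝ) / α n + 2)) ∧
    ((fun n : ℕ => (α n : ℝ) * Real.log (x n) - ξ ((n : ℝ) / α n))
      =O[atTop] fun n : ℕ => Real.log ((n : ℝ) / α n + 1) / (α n : ℝ)) := by
  have setup : ∀ n : ℕ, 3 ≤ n → 1 < (n : ℝ) / (α n : ℝ) := by
    intro n hn
    obtain ⟨hα1, hα2⟩ := hα n (by omega)
    have hn3 : (3:ℝ) ≤ (n:ℝ) := by exact_mod_cast hn
    have hm1 : 1 < (α n : ℝ) := lt_of_lt_of_le (lt_of_lt_of_le log3_gt_one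
      (Real.log_le_log (by norm_num) hn3)) hα1
    have hmn : (α n : ℝ) < (n : ℝ) := by exact_mod_cast hα2
    exact (one_lt_div (by linarith)).2 hmn
  refine ⟨?_, ?_, ?_⟩
  · rw [Asymptotics.isBigO_iff]
    refine ⟨250, ?_⟩
    filter_upwards [Filter.eventually_ge_atTop 3] with n hn
    obtain ⟨hα1, hα2⟩ := hα n (by omega)
    obtain ⟨hx0, hxs⟩ := hx n (by omega)
    obtain ⟨hne, heq⟩ := hξ _ (setup n hn)
    have h := (main_est hn hα1 hα2 hx0 hxs hne heq).2
    rw [Real.norm_eq_abs, Real.norm_eq_abs]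
    exact le_trans h (mul_le_mul_of_nonneg_left (le_abs_self _) (by norm_num))
  · rw [Asymptotics.isBigO_iff]
    refine ⟨C2, ?_⟩
    filter_upwards [Filter.eventually_ge_atTop 3] with n hn
    obtain ⟨hne, heq⟩ := hξ _ (setup n hn)
    have h := part2_bound (setup n hn) hne heq
    rw [Real.norm_eq_abs, Real.norm_eq_abs]
    exact le_trans h (mul_le_mul_of_nonneg_left (le_abs_self _) C2_nonneg)
  · rw [Asymptotics.isBigO_iff]
    refine ⟨4, ?_⟩
    filter_upwards [Filter.eventually_ge_atTop 3] with n hn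
    obtain ⟨hα1, hα2⟩ := hα n (by omega)
    obtain ⟨hx0, hxs⟩ := hx n (by omega)
    obtain ⟨hne, heq⟩ := hξ _ (setup n hn)
    have h := (main_est hn hα1 hα2 hx0 hxs hne heq).1
    rw [Real.norm_eq_abs, Real.norm_eq_abs]
    exact le_trans h (mul_le_mul_of_nonneg_left (le_abs_self _) (by norm_num))
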